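/- Let G be a finite simple graph and let u be a twin vertex of G, i.e., there exists a vertex v ≠ u with N[u] = N[v]. Then γ_gr(G - u) = γ_gr(G), where G - u is the induced subgraph of G on V(G) \ {u}. -/

import Mathlib

/-- The closed neighborhood `N[v] = {v} ∪ N(v)` of a vertex. -/
def closedNbhd {V : Type*} (G : SimpleGraph V) (v : V) : Set V :=
  insert v (G.neighborSet v)

/-- A sequence (list) of pairwise distinct vertices is legal if each vertex
footprints some vertex not dominated by the previous ones. -/
def IsLegalSeq {V : Type*} (G : SimpleGraph V) (l : List V) : Prop :=
  l.Nodup ∧ ∀ i : Fin l.length, ∃ u,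
    u ∈ closedNbhd G (l.get i) ∧
    ∀ j : Fin l.length, (j : ℕ) < (i : ℕ) → u ∉ closedNbhd G (l.get j)

/-- A legal dominating sequence. -/
def IsDomSeq {V : Type*} (G : SimpleGraph V) (l : List V) : Prop :=
  IsLegalSeq G l ∧ ∀ u : V, ∃ v ∈ l, u ∈ closedNbhd G v

/-- The Grundy domination number: the maximum length of a legal dominating sequence. -/
noncomputable def grundyDomNum {V : Type*} (G : SimpleGraph V) : ℕ :=
  sSup {k : ℕ | ∃ l : List V, IsDomSeq G l ∧ l.length = k}

lemma mem_closedNbhd {V : Type*} {G : SimpleGraph V} {x y : V} :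
    x ∈ closedNbhd G y ↔ x = y ∨ G.Adj y x := by
  simp [closedNbhd]

lemma closedNbhd_comm {V : Type*} {G : SimpleGraph V} {x y : V} :
    x ∈ closedNbhd G y ↔ y ∈ closedNbhd G x := by
  simp only [mem_closedNbhd]
  constructor <;> (rintro (h | h); exacts [Or.inl h.symm, Or.inr h.symm])

lemma mem_closedNbhd_induce {V : Type*} {G : SimpleGraph V} {s : Set V} {x y : s} :
    x ∈ closedNbhd (G.induce s) y ↔ (x : V) ∈ closedNbhd G (y : V) := by
  simp [mem_closedNbhd, SimpleGraph.comap_adj, Subtype.ext_iff]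

lemma get_map' {α β : Type*} (f : α → β) (l : List α) (i : Fin (l.map f).length) :
    (l.map f).get i = f (l.get ⟨i, by simpa using i.2⟩) := by
  simp

/-- a legal sequence cannot contain both twins -/
lemma not_both_twins {V : Type*} {G : SimpleGraph V} {u v : V} (hvu : v ≠ u)
    (huv : closedNbhd G u = closedNbhd G v) {l : List V}
    (hleg : IsLegalSeq G l) (hu : u ∈ l) (hv : v ∈ l) : False := by
  obtain ⟨i, hi⟩ := List.mem_iff_get.mp hu
  obtain ⟨j, hj⟩ := List.mem_iff_get.mp hv
  have hij : (i : ℕ) ≠ (j : ℕ) := by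
    intro h
    apply hvu
    rw [← hi, ← hj]
    congr 1
    exact Fin.ext h.symm
  rcases lt_or_gt_of_ne hij with h | h
  · obtain ⟨x, hx1, hx2⟩ := hleg.2 j
    exact hx2 i h (by rwa [hi, huv, ← hj] )
  · obtain ⟨x, hx1, hx2⟩ := hleg.2 i
    exact hx2 j h (by rwa [hj, ← huv, ← hi] )

lemma lift_dom {V : Type*} {G : SimpleGraph V} {u v : V} (hvu : v ≠ u)
    (huv : closedNbhd G u = closedNbhd G v) {l : List ({w : V | w ≠ u} : Set V)}
    (hl : IsDomSeq (G.induce {w : V | w ≠ u}) l) :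
    IsDomSeq G (l.map Subtype.val) := by
  obtain ⟨⟨hnd, hleg⟩, hdom⟩ := hl
  refine ⟨⟨hnd.map Subtype.val_injective, ?_⟩, ?_⟩
  · intro i
    set i' : Fin l.length := ⟨i, by simpa using i.2⟩ with hi'
    obtain ⟨x, hx1, hx2⟩ := hleg i'
    refine ⟨(x : V), ?_, ?_⟩
    · rw [get_map']
      exact mem_closedNbhd_induce.mp hx1
    · intro j hj
      rw [get_map']
      set j' : Fin l.length := ⟨j, by simpa using j.2⟩ with hj'
      intro hmem
      exact hx2 j' hj (mem_closedNbhd_induce.mpr hmem)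
  · intro w
    by_cases hw : w = u
    · obtain ⟨a, ha, hva⟩ := hdom ⟨v, hvu⟩
      refine ⟨(a : V), List.mem_map_of_mem (f := Subtype.val) ha, ?_⟩
      have : v ∈ closedNbhd G (a : V) := mem_closedNbhd_induce.mp hva
      rw [closedNbhd_comm] at this
      rw [← huv] at this
      rw [hw, closedNbhd_comm]
      exact this
    · obtain ⟨a, ha, hwa⟩ := hdom ⟨w, hw⟩
      exact ⟨(a : V), List.mem_map_of_mem (f := Subtype.val) ha, mem_closedNbhd_induce.mp hwa⟩

lemma push_dom {V : Type*} {G : SimpleGraph V} {u v : V} (hvu : v ≠ u)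
    (huv : closedNbhd G u = closedNbhd G v) {l : List V}
    (hl : IsDomSeq G l) :
    ∃ l' : List ({w : V | w ≠ u} : Set V),
      IsDomSeq (G.induce {w : V | w ≠ u}) l' ∧ l'.length = l.length := by
  classical
  obtain ⟨⟨hnd, hleg⟩, hdom⟩ := hl
  set f : V → ({w : V | w ≠ u} : Set V) :=
    fun w => if h : w = u then ⟨v, hvu⟩ else ⟨w, h⟩ with hf
  -- key: closedNbhd G ↑(f w) = closedNbhd G w
  have hkey : ∀ w : V, closedNbhd G ((f w : V)) = closedNbhd G w := by
    intro w
    by_cases h : w = u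
    · simp [hf, h, ← huv]
    · simp [hf, h]
  have hmemkey : ∀ (x w : V), ((f x : V)) ∈ closedNbhd G w ↔ x ∈ closedNbhd G w := by
    intro x w
    rw [closedNbhd_comm, hkey, ← closedNbhd_comm]
  refine ⟨l.map f, ⟨⟨?_, ?_⟩, ?_⟩, by simp⟩
  · refine hnd.map_on ?_
    intro x hx y hy hxy
    by_cases hxu : x = u <;> by_cases hyu : y = u
    · rw [hxu, hyu]
    · exfalso
      simp only [hf, dif_pos hxu, dif_neg hyu, Subtype.mk.injEq] at hxy
      exact not_both_twins hvu huv ⟨hnd, hleg⟩ (hxu ▸ hx) (hxy ▸ hy)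
    · exfalso
      simp only [hf, dif_neg hxu, dif_pos hyu, Subtype.mk.injEq] at hxy
      exact not_both_twins hvu huv ⟨hnd, hleg⟩ (hyu ▸ hy) (hxy ▸ hx)
    · simpa [hf, dif_neg hxu, dif_neg hyu, Subtype.mk.injEq] using hxy
  · intro i
    set i' : Fin l.length := ⟨i, by simpa using i.2⟩ with hi'
    obtain ⟨x, hx1, hx2⟩ := hleg i'
    refine ⟨f x, ?_, ?_⟩
    · rw [mem_closedNbhd_induce, get_map', hkey]
      exact (hmemkey x _).mpr hx1
    · intro j hj hmem
      set j' : Fin l.length := ⟨j, by simpa using j.2⟩ with hj'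
      rw [mem_closedNbhd_induce, get_map', hkey] at hmem
      exact hx2 j' hj ((hmemkey x _).mp hmem)
  · rintro ⟨w, hw⟩
    obtain ⟨a, ha, hwa⟩ := hdom w
    refine ⟨f a, List.mem_map_of_mem (f := f) ha, ?_⟩
    rw [mem_closedNbhd_induce, hkey]
    exact hwa

theorem grundy_twin_vertex_deletion {V : Type*} [Fintype V] (G : SimpleGraph V)
    (u : V)
    (htwin : ∃ v : V, v ≠ u ∧ closedNbhd G u = closedNbhd G v) :
    grundyDomNum (G.induce {v : V | v ≠ u}) = grundyDomNum G := by
  obtain ⟨v, hvu, huv⟩ := htwin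
  unfold grundyDomNum
  congr 1
  ext k
  constructor
  · rintro ⟨l, hl, rfl⟩
    exact ⟨l.map Subtype.val, lift_dom hvu huv hl, by simp⟩
  · rintro ⟨l, hl, rfl⟩
    obtain ⟨l', hl', hlen⟩ := push_dom hvu huv hl
    exact ⟨l', hl', hlen⟩
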